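/- Entry bound for R·B·R (first-derivative resolvent estimate). Fix d, N_b ≥ 1 and 𝔪, c₁ > 0. There exists C > 0, depending only on d, N_b, 𝔪, c₁, such that the following holds. Let Λ be a countable set, y : Λ → ℝ^d 𝔪-separated, m ∈ Λ, and let 𝔡, γ, γ₁ > 0. Let R and B be bounded operators on ℓ²(Λ × {1,…,N_b}) whose matrix entries satisfy |R^{ab}_{ℓk}| ≤ (2/𝔡) e^{−γ r_{ℓk}} and |B^{ab}_{ℓk}| ≤ c₁ e^{−γ₁ (r_{ℓm} + r_{mk})} for all ℓ,k,a,b. Then, with η := min{γ, γ₁}, for all ℓ ∈ Λ and 1 ≤ a ≤ N_b: |(R B R)^{aa}_{ℓℓ}| ≤ C 𝔡^{−2} (1 + η^{−4d}) e^{−(η/2) r_{ℓm}}. -/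

import Mathlib

open MeasureTheory Metric Nat
open scoped ENNReal

/-- Matrix entry `T^{ab}_{ℓk} = ⟨δ_{(ℓ,a)}, T δ_{(k,b)}⟩` of a bounded operator on `ℓ²(ι)`. -/
noncomputable def entry {ι : Type*} [DecidableEq ι]
    (T : lp (fun _ : ι => ℂ) 2 →L[ℂ] lp (fun _ : ι => ℂ) 2) (i j : ι) : ℂ :=
  inner ℂ (lp.single 2 i (1 : ℂ)) (T (lp.single 2 j (1 : ℂ)))


lemma exp_le_aux (n : ℕ) {t s : ℝ} (ht : 0 < t) (ht1 : t ≤ 1) (hs : 0 ≤ s) :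
    Real.exp (-(t * s)) ≤ (2 ^ n * (1 + n !)) * t⁻¹ ^ n * (1 + s) ^ (-(n : ℝ)) := by
  have hts : 0 ≤ t * s := mul_nonneg ht.le hs
  have hinv1 : (1:ℝ) ≤ t⁻¹ := (one_le_inv₀ ht).2 ht1
  have hinvn : (1:ℝ) ≤ t⁻¹ ^ n := one_le_pow₀ hinv1
  have hexp1 : (1:ℝ) ≤ Real.exp (t * s) := Real.one_le_exp hts
  -- key: (1+s)^n ≤ (2^n * (1+n!)) * t⁻¹^n * exp (t*s)
  have hpow : s ^ n ≤ (n ! : ℝ) * t⁻¹ ^ n * Real.exp (t * s) := by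
    have h := Real.pow_div_factorial_le_exp (x := t * s) hts n
    -- (t*s)^n / n! ≤ exp (t*s)
    have hfac : (0:ℝ) < (n ! : ℝ) := by exact_mod_cast n.factorial_pos
    rw [div_le_iff₀ hfac] at h
    have : s ^ n = t⁻¹ ^ n * (t * s) ^ n := by
      rw [mul_pow, ← mul_assoc, ← mul_pow, inv_mul_cancel₀ ht.ne', one_pow, one_mul]
    rw [this]
    calc t⁻¹ ^ n * (t * s) ^ n ≤ t⁻¹ ^ n * (Real.exp (t * s) * n !) :=
          mul_le_mul_of_nonneg_left h (by positivity)
      _ = (n ! : ℝ) * t⁻¹ ^ n * Real.exp (t * s) := by ring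
  have h1s : (1:ℝ) + s ≤ 2 * max 1 s := by
    rcases le_total s 1 with h | h
    · calc (1:ℝ) + s ≤ 2 := by linarith
        _ ≤ 2 * max 1 s := by nlinarith [le_max_left (1:ℝ) s]
    · calc (1:ℝ) + s ≤ 2 * s := by linarith
        _ ≤ 2 * max 1 s := by nlinarith [le_max_right (1:ℝ) s]
  have hmaxpow : (max 1 s) ^ n ≤ 1 + s ^ n := by
    rcases le_total s 1 with h | h
    · rw [max_eq_left h]
      simp only [one_pow]
      nlinarith [pow_nonneg hs n]
    · rw [max_eq_right h]
      nlinarith []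
  have hkey : (1 + s) ^ n ≤ (2 ^ n * (1 + n !)) * t⁻¹ ^ n * Real.exp (t * s) := by
    calc (1 + s) ^ n ≤ (2 * max 1 s) ^ n :=
          pow_le_pow_left₀ (by linarith) h1s n
      _ = 2 ^ n * (max 1 s) ^ n := mul_pow 2 _ n
      _ ≤ 2 ^ n * (1 + s ^ n) := by
          apply mul_le_mul_of_nonneg_left hmaxpow (by positivity)
      _ ≤ 2 ^ n * (t⁻¹ ^ n * Real.exp (t * s) + (n ! : ℝ) * t⁻¹ ^ n * Real.exp (t * s)) := by
          apply mul_le_mul_of_nonneg_left _ (by positivity)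
          have : (1:ℝ) ≤ t⁻¹ ^ n * Real.exp (t * s) := by nlinarith [hinvn, hexp1]
          linarith [hpow]
      _ = (2 ^ n * (1 + n !)) * t⁻¹ ^ n * Real.exp (t * s) := by ring
  have hpos : (0:ℝ) < 1 + s := by linarith
  rw [show -(n:ℝ) = -((n:ℕ):ℝ) from rfl, Real.rpow_neg hpos.le, Real.rpow_natCast,
    Real.exp_neg, ← div_eq_mul_inv, ← one_div]
  rw [div_le_div_iff₀ (Real.exp_pos _) (by positivity)]
  calc 1 * (1 + s) ^ n = (1 + s) ^ n := one_mul _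
    _ ≤ (2 ^ n * (1 + n !)) * t⁻¹ ^ n * Real.exp (t * s) := hkey

lemma tsum_prod_fin {Λ : Type*} {n : ℕ} {f : Λ → ℝ} (h0 : ∀ q, 0 ≤ f q) (hf : Summable f) :
    Summable (fun p : Λ × Fin n => f p.1) ∧ ∑' p : Λ × Fin n, f p.1 = n * ∑' q, f q := by
  have hs : Summable (fun p : Λ × Fin n => f p.1) := by
    refine (summable_prod_of_nonneg fun p => h0 p.1).2 ⟨fun q => Summable.of_finite, ?_⟩
    simp only [tsum_fintype, Finset.sum_const, Finset.card_univ, Fintype.card_fin,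
      nsmul_eq_mul]
    exact hf.mul_left _
  refine ⟨hs, ?_⟩
  rw [Summable.tsum_prod' hs fun q => Summable.of_finite]
  simp only [tsum_fintype, Finset.sum_const, Finset.card_univ, Fintype.card_fin, nsmul_eq_mul]
  rw [tsum_mul_left]

lemma sep_sum_bound (d : ℕ) (hd : 1 ≤ d) (𝔪 : ℝ) (h𝔪 : 0 < 𝔪) :
    ∃ K : ℝ, 1 ≤ K ∧ ∀ (Λ : Type) [Countable Λ] (y : Λ → EuclideanSpace ℝ (Fin d)),
      (∀ ℓ k : Λ, ℓ ≠ k → 𝔪 ≤ dist (y ℓ) (y k)) →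
      ∀ (c : EuclideanSpace ℝ (Fin d)) (t : ℝ), 0 < t →
        Summable (fun q : Λ => Real.exp (-(t * dist (y q) c))) ∧
        ∑' q : Λ, Real.exp (-(t * dist (y q) c)) ≤ K * (1 + t⁻¹) ^ (2 * d) := by
  set E := EuclideanSpace ℝ (Fin d)
  set ρ : ℝ := 𝔪 / 2 with hρdef
  have hρ : 0 < ρ := by positivity
  set J : ℝ≥0∞ := ∫⁻ x : E, ENNReal.ofReal ((1 + ‖x‖) ^ (-((d : ℝ) + 1))) with hJdef
  have hJ : J ≠ ⊤ := by
    refine (finite_integral_one_add_norm ?_).ne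
    rw [finrank_euclideanSpace_fin]
    linarith
  set V : ℝ≥0∞ := volume (ball (0 : E) ρ) with hVdef
  have hV0 : V ≠ 0 := (measure_ball_pos volume _ hρ).ne'
  have hVtop : V ≠ ⊤ := measure_ball_lt_top.ne
  set A0 : ℝ := 2 ^ (d + 1) * (1 + (d + 1)!) with hA0def
  have hA0 : 0 < A0 := by positivity
  set Kt : ℝ≥0∞ := V⁻¹ * ENNReal.ofReal (Real.exp ρ) * ENNReal.ofReal A0 * J with hKdef
  have hKt : Kt ≠ ⊤ := by
    apply ENNReal.mul_ne_top
    apply ENNReal.mul_ne_top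
    apply ENNReal.mul_ne_top
    · exact ENNReal.inv_ne_top.2 hV0
    · exact ENNReal.ofReal_ne_top
    · exact ENNReal.ofReal_ne_top
    · exact hJ
  refine ⟨max Kt.toReal 1, le_max_right _ _, ?_⟩
  intro Λ _ y hsep c t ht
  set t' : ℝ := min t 1 with ht'def
  have ht'0 : 0 < t' := lt_min ht one_pos
  have ht'1 : t' ≤ 1 := min_le_right _ _
  have ht't : t' ≤ t := min_le_left _ _
  -- pairwise disjoint balls
  have hdisj : Pairwise (Function.onFun Disjoint fun q : Λ => ball (y q) ρ) := by
    intro q q' hqq'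
    apply ball_disjoint_ball
    calc ρ + ρ = 𝔪 := by rw [hρdef]; ring
      _ ≤ dist (y q) (y q') := hsep q q' hqq'
  -- per-point bound
  have hpt : ∀ q : Λ, ENNReal.ofReal (Real.exp (-(t' * dist (y q) c))) * V ≤
      ∫⁻ x in ball (y q) ρ,
        ENNReal.ofReal (Real.exp ρ * Real.exp (-(t' * dist x c))) := by
    intro q
    have hVq : volume (ball (y q) ρ) = V :=
      Measure.addHaar_ball_center volume (y q) ρ
    rw [← hVq, ← setLIntegral_const]
    refine setLIntegral_mono (by fun_prop) fun x hx => ?_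
    apply ENNReal.ofReal_le_ofReal
    rw [← Real.exp_add]
    apply Real.exp_le_exp.2
    have hxq : dist x (y q) < ρ := mem_ball.mp hx
    have htr : dist x c ≤ dist x (y q) + dist (y q) c := dist_triangle _ _ _
    nlinarith [dist_nonneg (x := x) (y := c), dist_nonneg (x := y q) (y := c)]
  -- summing up
  have hmeas : Measurable fun x : E =>
      ENNReal.ofReal (Real.exp ρ * Real.exp (-(t' * dist x c))) := by fun_prop
  have hsum1 : (∑' q : Λ, ENNReal.ofReal (Real.exp (-(t' * dist (y q) c)))) * V ≤
      ENNReal.ofReal (Real.exp ρ) *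
        ∫⁻ x : E, ENNReal.ofReal (Real.exp (-(t' * dist x c))) := by
    calc (∑' q : Λ, ENNReal.ofReal (Real.exp (-(t' * dist (y q) c)))) * V
        = ∑' q : Λ, ENNReal.ofReal (Real.exp (-(t' * dist (y q) c))) * V :=
          ENNReal.tsum_mul_right.symm
      _ ≤ ∑' q : Λ, ∫⁻ x in ball (y q) ρ,
            ENNReal.ofReal (Real.exp ρ * Real.exp (-(t' * dist x c))) :=
          ENNReal.tsum_le_tsum hpt
      _ = ∫⁻ x in ⋃ q : Λ, ball (y q) ρ,
            ENNReal.ofReal (Real.exp ρ * Real.exp (-(t' * dist x c))) :=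
          (lintegral_iUnion (fun q => measurableSet_ball) hdisj _).symm
      _ ≤ ∫⁻ x : E, ENNReal.ofReal (Real.exp ρ * Real.exp (-(t' * dist x c))) :=
          setLIntegral_le_lintegral _ _
      _ = ENNReal.ofReal (Real.exp ρ) *
            ∫⁻ x : E, ENNReal.ofReal (Real.exp (-(t' * dist x c))) := by
          simp_rw [ENNReal.ofReal_mul (Real.exp_nonneg ρ)]
          exact lintegral_const_mul' _ _ ENNReal.ofReal_ne_top
  have htrans : (∫⁻ x : E, ENNReal.ofReal (Real.exp (-(t' * dist x c)))) =
      ∫⁻ x : E, ENNReal.ofReal (Real.exp (-(t' * ‖x‖))) := by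
    have hde : ∀ x : E, dist x c = ‖x - c‖ := fun x => dist_eq_norm x c
    simp_rw [hde]
    exact lintegral_sub_right_eq_self (fun x => ENNReal.ofReal (Real.exp (-(t' * ‖x‖)))) c
  have hptwise : (∫⁻ x : E, ENNReal.ofReal (Real.exp (-(t' * ‖x‖)))) ≤
      ENNReal.ofReal (A0 * t'⁻¹ ^ (d + 1)) * J := by
    have hb : ∀ x : E, ENNReal.ofReal (Real.exp (-(t' * ‖x‖))) ≤
        ENNReal.ofReal (A0 * t'⁻¹ ^ (d + 1)) *
          ENNReal.ofReal ((1 + ‖x‖) ^ (-((d : ℝ) + 1))) := by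
      intro x
      rw [← ENNReal.ofReal_mul (by positivity)]
      apply ENNReal.ofReal_le_ofReal
      have := exp_le_aux (d + 1) ht'0 ht'1 (norm_nonneg x)
      calc Real.exp (-(t' * ‖x‖)) ≤
          (2 ^ (d + 1) * (1 + (d + 1)!)) * t'⁻¹ ^ (d + 1) * (1 + ‖x‖) ^ (-((d + 1 : ℕ) : ℝ)) :=
            this
        _ = A0 * t'⁻¹ ^ (d + 1) * (1 + ‖x‖) ^ (-((d : ℝ) + 1)) := by
            rw [hA0def]; push_cast; ring_nf
    calc (∫⁻ x : E, ENNReal.ofReal (Real.exp (-(t' * ‖x‖)))) ≤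
        ∫⁻ x : E, ENNReal.ofReal (A0 * t'⁻¹ ^ (d + 1)) *
          ENNReal.ofReal ((1 + ‖x‖) ^ (-((d : ℝ) + 1))) := lintegral_mono hb
      _ = ENNReal.ofReal (A0 * t'⁻¹ ^ (d + 1)) * J := by
          rw [hJdef]
          exact lintegral_const_mul' _ _ ENNReal.ofReal_ne_top
  -- conclusion in ℝ≥0∞
  have hmain : (∑' q : Λ, ENNReal.ofReal (Real.exp (-(t' * dist (y q) c)))) ≤
      Kt * ENNReal.ofReal (t'⁻¹ ^ (d + 1)) := by
    have h1 : (∑' q : Λ, ENNReal.ofReal (Real.exp (-(t' * dist (y q) c)))) * V ≤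
        ENNReal.ofReal (Real.exp ρ) * (ENNReal.ofReal (A0 * t'⁻¹ ^ (d + 1)) * J) := by
      refine hsum1.trans ?_
      rw [htrans]
      exact mul_le_mul_right hptwise _
    have h2 := (ENNReal.le_div_iff_mul_le (Or.inl hV0) (Or.inl hVtop)).2 h1
    refine h2.trans ?_
    rw [ENNReal.div_eq_inv_mul, ENNReal.ofReal_mul hA0.le, hKdef]
    ring_nf
    exact le_refl _
  -- transfer to ℝ
  have hfin : (∑' q : Λ, ENNReal.ofReal (Real.exp (-(t' * dist (y q) c)))) ≠ ⊤ :=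
    (hmain.trans_lt (ENNReal.mul_lt_top hKt.lt_top ENNReal.ofReal_lt_top)).ne
  have hsum' : Summable fun q : Λ => Real.exp (-(t' * dist (y q) c)) := by
    have h := ENNReal.summable_toReal hfin
    refine h.congr fun q => ?_
    exact ENNReal.toReal_ofReal (Real.exp_nonneg _)
  have hle : ∀ q : Λ, Real.exp (-(t * dist (y q) c)) ≤ Real.exp (-(t' * dist (y q) c)) := by
    intro q
    apply Real.exp_le_exp.2
    have := dist_nonneg (x := y q) (y := c)
    nlinarith
  have hsum : Summable fun q : Λ => Real.exp (-(t * dist (y q) c)) :=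
    Summable.of_nonneg_of_le (fun q => (Real.exp_pos _).le) hle hsum'
  refine ⟨hsum, ?_⟩
  have htsum' : ∑' q : Λ, Real.exp (-(t' * dist (y q) c)) =
      (∑' q : Λ, ENNReal.ofReal (Real.exp (-(t' * dist (y q) c)))).toReal := by
    rw [ENNReal.tsum_toReal_eq fun q => ENNReal.ofReal_ne_top]
    exact (tsum_congr fun q => (ENNReal.toReal_ofReal (Real.exp_nonneg _)).symm)
  have hb1 : t'⁻¹ ^ (d + 1) ≤ (1 + t⁻¹) ^ (2 * d) := by
    have hbase : t'⁻¹ ≤ 1 + t⁻¹ := by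
      rcases le_total t 1 with h | h
      · rw [ht'def, min_eq_left h]; linarith
      · rw [ht'def, min_eq_right h]
        simp only [inv_one]
        have : 0 ≤ t⁻¹ := by positivity
        linarith
    have h1b : (1:ℝ) ≤ 1 + t⁻¹ := by
      have : 0 ≤ t⁻¹ := by positivity
      linarith
    calc t'⁻¹ ^ (d + 1) ≤ (1 + t⁻¹) ^ (d + 1) :=
          pow_le_pow_left₀ (by positivity) hbase _
      _ ≤ (1 + t⁻¹) ^ (2 * d) := pow_le_pow_right₀ h1b (by omega)
  calc ∑' q : Λ, Real.exp (-(t * dist (y q) c))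
      ≤ ∑' q : Λ, Real.exp (-(t' * dist (y q) c)) :=
        Summable.tsum_le_tsum hle hsum hsum'
    _ = (∑' q : Λ, ENNReal.ofReal (Real.exp (-(t' * dist (y q) c)))).toReal := htsum'
    _ ≤ (Kt * ENNReal.ofReal (t'⁻¹ ^ (d + 1))).toReal :=
        ENNReal.toReal_mono (ENNReal.mul_ne_top hKt ENNReal.ofReal_ne_top) hmain
    _ = Kt.toReal * t'⁻¹ ^ (d + 1) := by
        rw [ENNReal.toReal_mul, ENNReal.toReal_ofReal (by positivity)]
    _ ≤ max Kt.toReal 1 * (1 + t⁻¹) ^ (2 * d) := by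
        apply mul_le_mul (le_max_left _ _) hb1 (by positivity) (by positivity)

section OpStuff

variable {ι : Type*} [DecidableEq ι]

local notation "H" => lp (fun _ : ι => ℂ) 2

lemma coord_eq (f : lp (fun _ : ι => ℂ) 2) (j : ι) :
    inner (𝕜 := ℂ) (lp.single 2 j (1 : ℂ)) f = f j := by
  rw [lp.inner_single_left]
  simp [RCLike.inner_apply]

lemma key_hasSum (T : lp (fun _ : ι => ℂ) 2 →L[ℂ] lp (fun _ : ι => ℂ) 2) (i : ι)
    (x : lp (fun _ : ι => ℂ) 2) :
    HasSum (fun j => x j * entry T i j)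
      (inner (𝕜 := ℂ) (lp.single 2 i (1 : ℂ)) (T x)) := by
  have h := lp.hasSum_single (E := fun _ : ι => ℂ) ENNReal.ofNat_ne_top x
  have h2 := ((innerSL ℂ (lp.single 2 i (1 : ℂ))).comp T).hasSum h
  have heq : (fun j => ((innerSL ℂ (lp.single 2 i (1 : ℂ))).comp T) (lp.single 2 j (x j)))
      = fun j => x j * entry T i j := by
    funext j
    have hsm : lp.single 2 j (x j) = x j • (lp.single 2 j (1 : ℂ) : lp (fun _ : ι => ℂ) 2) := by
      rw [← lp.single_smul (E := fun _ : ι => ℂ) 2 j (x j) (1 : ℂ), smul_eq_mul, mul_one]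
    rw [ContinuousLinearMap.comp_apply, hsm, T.map_smul, innerSL_apply_apply, inner_smul_right]
    rfl
  rw [heq] at h2
  exact h2

end OpStuff

/-- Entry bound for `R·B·R` (first-derivative resolvent estimate): with
`|R^{ab}_{ℓk}| ≤ (2/𝔡)e^{−γ r_{ℓk}}` and `|B^{ab}_{ℓk}| ≤ c₁ e^{−γ₁(r_{ℓm}+r_{mk})}`, and
`η = min{γ,γ₁}`, one has `|(RBR)^{aa}_{ℓℓ}| ≤ C 𝔡^{−2}(1+η^{−4d}) e^{−(η/2) r_{ℓm}}`, with
`C` depending only on `d, N_b, 𝔪, c₁`. -/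
theorem stmt6 (d Nb : ℕ) (hd : 1 ≤ d) (hNb : 1 ≤ Nb) (𝔪 c₁ : ℝ)
    (h𝔪 : 0 < 𝔪) (hc₁ : 0 < c₁) :
    ∃ C : ℝ, 0 < C ∧
      ∀ (Λ : Type) [Countable Λ] [DecidableEq Λ]
        (y : Λ → EuclideanSpace ℝ (Fin d)),
        (∀ ℓ k : Λ, ℓ ≠ k → 𝔪 ≤ dist (y ℓ) (y k)) →
        ∀ (m : Λ) (𝔡 γ γ₁ : ℝ), 0 < 𝔡 → 0 < γ → 0 < γ₁ →
          ∀ R B : lp (fun _ : Λ × Fin Nb => ℂ) 2 →L[ℂ] lp (fun _ : Λ × Fin Nb => ℂ) 2,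
            (∀ (ℓ k : Λ) (a b : Fin Nb),
              ‖entry R (ℓ, a) (k, b)‖ ≤ (2 / 𝔡) * Real.exp (-γ * dist (y ℓ) (y k))) →
            (∀ (ℓ k : Λ) (a b : Fin Nb),
              ‖entry B (ℓ, a) (k, b)‖ ≤
                c₁ * Real.exp (-γ₁ * (dist (y ℓ) (y m) + dist (y m) (y k)))) →
            ∀ (ℓ : Λ) (a : Fin Nb),
              ‖entry (R ∘L B ∘L R) (ℓ, a) (ℓ, a)‖ ≤
                C * 𝔡⁻¹ ^ 2 * (1 + (min γ γ₁)⁻¹ ^ (4 * d)) *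
                  Real.exp (-(min γ γ₁ / 2) * dist (y ℓ) (y m)) := by
  obtain ⟨K, hK1, hKA⟩ := sep_sum_bound d hd 𝔪 h𝔪
  have hK0 : (0:ℝ) < K := lt_of_lt_of_le one_pos hK1
  have hNbR : (0:ℝ) < (Nb:ℝ) := by exact_mod_cast Nat.lt_of_lt_of_le Nat.zero_lt_one hNb
  refine ⟨4 * Nb ^ 2 * c₁ * K ^ 2 * 3 ^ (4 * d), ?_, ?_⟩
  · exact mul_pos (mul_pos (mul_pos (mul_pos (by norm_num) (pow_pos hNbR 2)) hc₁)
      (pow_pos hK0 2)) (pow_pos (by norm_num) _)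
  intro Λ _ _ y hsep m 𝔡 γ γ₁ h𝔡 hγ hγ₁ R B hR hB ℓ a
  rw [show -(min γ γ₁ / 2) * dist (y ℓ) (y m) = -(min γ γ₁ / 2 * dist (y ℓ) (y m)) from
    neg_mul _ _]
  set η : ℝ := min γ γ₁ with hηdef
  have hη : 0 < η := lt_min hγ hγ₁
  set t : ℝ := η / 2 with htdef
  have ht : 0 < t := by positivity
  have htγ : t ≤ γ := by
    have : η ≤ γ := min_le_left _ _
    rw [htdef]; linarith
  have htγ₁ : t ≤ γ₁ := by
    have : η ≤ γ₁ := min_le_right _ _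
    rw [htdef]; linarith
  obtain ⟨hSsum, hSbd⟩ := hKA Λ y hsep (y ℓ) t ht
  set S : ℝ := ∑' q : Λ, Real.exp (-(t * dist (y q) (y ℓ))) with hSdef
  have hS0 : 0 ≤ S := tsum_nonneg fun q => (Real.exp_pos _).le
  set elm : ℝ := Real.exp (-(t * dist (y ℓ) (y m))) with helmdef
  have helm : 0 < elm := Real.exp_pos _
  set i : Λ × Fin Nb := (ℓ, a) with hidef
  set u : lp (fun _ : Λ × Fin Nb => ℂ) 2 := R (lp.single 2 i 1) with hudef
  set x : lp (fun _ : Λ × Fin Nb => ℂ) 2 := B u with hxdef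
  have hu : ∀ k : Λ × Fin Nb, entry R k i = u k := fun k => coord_eq u k
  have hxS : ∀ j : Λ × Fin Nb, HasSum (fun k => entry R k i * entry B j k) (x j) := by
    intro j
    have h := key_hasSum B j u
    rw [← hxdef] at h
    rw [coord_eq x j] at h
    refine h.congr_fun fun k => ?_
    rw [hu k]
  have hOuter : HasSum (fun j => x j * entry R i j) (entry (R ∘L B ∘L R) i i) := by
    have h := key_hasSum R i x
    rw [hxdef, hudef] at h
    exact h
  -- numeric bounds
  set c3 : Λ → ℝ := fun p => 2 / 𝔡 * c₁ * Real.exp (-(γ₁ * dist (y p) (y m))) * elm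
    with hc3def
  have hc30 : ∀ p, 0 ≤ c3 p := fun p => by
    rw [hc3def]; positivity
  have hIn : ∀ (p : Λ) (pc : Fin Nb) (k : Λ × Fin Nb),
      ‖entry R k i * entry B (p, pc) k‖ ≤ c3 p * Real.exp (-(t * dist (y k.1) (y ℓ))) := by
    rintro p pc ⟨q, b⟩
    calc ‖entry R (q, b) i * entry B (p, pc) (q, b)‖
        = ‖entry R (q, b) i‖ * ‖entry B (p, pc) (q, b)‖ := norm_mul _ _
      _ ≤ (2 / 𝔡 * Real.exp (-γ * dist (y q) (y ℓ))) *
          (c₁ * Real.exp (-γ₁ * (dist (y p) (y m) + dist (y m) (y q)))) :=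
          mul_le_mul (hR q ℓ b a) (hB p q pc b) (norm_nonneg _) (by positivity)
      _ = 2 / 𝔡 * c₁ * Real.exp (-γ * dist (y q) (y ℓ) +
            -γ₁ * (dist (y p) (y m) + dist (y m) (y q))) := by rw [Real.exp_add]; ring
      _ ≤ 2 / 𝔡 * c₁ * Real.exp (-(γ₁ * dist (y p) (y m)) +
            (-(t * dist (y ℓ) (y m)) + -(t * dist (y q) (y ℓ)))) := by
          apply mul_le_mul_of_nonneg_left _ (by positivity)
          apply Real.exp_le_exp.2
          have htr : dist (y ℓ) (y m) ≤ dist (y q) (y ℓ) + dist (y m) (y q) := by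
            calc dist (y ℓ) (y m) ≤ dist (y ℓ) (y q) + dist (y q) (y m) := dist_triangle _ _ _
              _ = dist (y q) (y ℓ) + dist (y m) (y q) := by
                  rw [dist_comm (y ℓ) (y q), dist_comm (y q) (y m)]
          have hd1 : (0:ℝ) ≤ dist (y q) (y ℓ) := dist_nonneg
          have hd2 : (0:ℝ) ≤ dist (y m) (y q) := dist_nonneg
          have e1 : η * dist (y q) (y ℓ) ≤ γ * dist (y q) (y ℓ) :=
            mul_le_mul_of_nonneg_right (min_le_left _ _) hd1
          have e2 : η * dist (y m) (y q) ≤ γ₁ * dist (y m) (y q) :=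
            mul_le_mul_of_nonneg_right (min_le_right _ _) hd2
          have e3 : t * dist (y ℓ) (y m) ≤
              t * dist (y q) (y ℓ) + t * dist (y m) (y q) := by
            have := mul_le_mul_of_nonneg_left htr ht.le
            rw [mul_add] at this
            exact this
          have e4 : t * dist (y m) (y q) ≤ η * dist (y m) (y q) :=
            mul_le_mul_of_nonneg_right (by rw [htdef]; linarith) hd2
          have e5 : t * dist (y q) (y ℓ) + t * dist (y q) (y ℓ) = η * dist (y q) (y ℓ) := by
            rw [htdef]; ring
          linarith [e1, e2, e3, e4, e5]
      _ = c3 p * Real.exp (-(t * dist (y q) (y ℓ))) := by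
          rw [hc3def]
          simp only
          rw [Real.exp_add, Real.exp_add]
          ring
  have hxj : ∀ j : Λ × Fin Nb, ‖x j‖ ≤ Nb * (c3 j.1 * S) := by
    rintro ⟨p, pc⟩
    have hfs : Summable fun q : Λ => c3 p * Real.exp (-(t * dist (y q) (y ℓ))) :=
      hSsum.mul_left _
    have h0 : ∀ q : Λ, 0 ≤ c3 p * Real.exp (-(t * dist (y q) (y ℓ))) := fun q =>
      mul_nonneg (hc30 p) (Real.exp_pos _).le
    obtain ⟨hdsum, hdtsum⟩ := tsum_prod_fin (n := Nb) h0 hfs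
    have hns : Summable fun k : Λ × Fin Nb => ‖entry R k i * entry B (p, pc) k‖ :=
      Summable.of_nonneg_of_le (fun k => norm_nonneg _) (hIn p pc) hdsum
    calc ‖x (p, pc)‖ = ‖∑' k, entry R k i * entry B (p, pc) k‖ := by
          rw [(hxS (p, pc)).tsum_eq]
      _ ≤ ∑' k, ‖entry R k i * entry B (p, pc) k‖ := norm_tsum_le_tsum_norm hns
      _ ≤ ∑' k : Λ × Fin Nb, c3 p * Real.exp (-(t * dist (y k.1) (y ℓ))) :=
          Summable.tsum_le_tsum (hIn p pc) hns hdsum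
      _ = Nb * ∑' q : Λ, c3 p * Real.exp (-(t * dist (y q) (y ℓ))) := hdtsum
      _ = Nb * (c3 p * S) := by rw [tsum_mul_left]
  set c2 : ℝ := Nb * (2 / 𝔡) ^ 2 * c₁ * elm * S with hc2def
  have hc20 : 0 ≤ c2 := by
    rw [hc2def]
    exact mul_nonneg (by positivity) hS0
  have hOut : ∀ j : Λ × Fin Nb,
      ‖x j * entry R i j‖ ≤ c2 * Real.exp (-(t * dist (y j.1) (y ℓ))) := by
    rintro ⟨p, pc⟩
    have hexp : Real.exp (-(γ₁ * dist (y p) (y m))) * Real.exp (-γ * dist (y ℓ) (y p)) ≤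
        Real.exp (-(t * dist (y p) (y ℓ))) := by
      rw [← Real.exp_add]
      apply Real.exp_le_exp.2
      rw [dist_comm (y ℓ) (y p)]
      have e1 : t * dist (y p) (y ℓ) ≤ γ * dist (y p) (y ℓ) :=
        mul_le_mul_of_nonneg_right htγ dist_nonneg
      have e2 : (0:ℝ) ≤ γ₁ * dist (y p) (y m) := by positivity
      linarith [e1, e2]
    calc ‖x (p, pc) * entry R i (p, pc)‖
        = ‖x (p, pc)‖ * ‖entry R i (p, pc)‖ := norm_mul _ _
      _ ≤ (Nb * (c3 p * S)) * (2 / 𝔡 * Real.exp (-γ * dist (y ℓ) (y p))) :=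
          mul_le_mul (hxj (p, pc)) (hR ℓ p a pc) (norm_nonneg _)
            (mul_nonneg (by positivity) (mul_nonneg (hc30 p) hS0))
      _ = (Nb * (2 / 𝔡) ^ 2 * c₁ * elm * S) *
          (Real.exp (-(γ₁ * dist (y p) (y m))) * Real.exp (-γ * dist (y ℓ) (y p))) := by
          rw [hc3def]
          simp only
          ring
      _ ≤ c2 * Real.exp (-(t * dist (y p) (y ℓ))) := by
          rw [hc2def]
          exact mul_le_mul_of_nonneg_left hexp (mul_nonneg (by positivity) hS0)
  have hfs2 : Summable fun q : Λ => c2 * Real.exp (-(t * dist (y q) (y ℓ))) :=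
    hSsum.mul_left _
  have h02 : ∀ q : Λ, 0 ≤ c2 * Real.exp (-(t * dist (y q) (y ℓ))) := fun q =>
    mul_nonneg hc20 (Real.exp_pos _).le
  obtain ⟨hdsum2, hdtsum2⟩ := tsum_prod_fin (n := Nb) h02 hfs2
  have hns2 : Summable fun j : Λ × Fin Nb => ‖x j * entry R i j‖ :=
    Summable.of_nonneg_of_le (fun j => norm_nonneg _) hOut hdsum2
  -- final numeric estimate
  have h5 : (1 + t⁻¹) ^ (4 * d) ≤ 3 ^ (4 * d) * (1 + η⁻¹ ^ (4 * d)) := by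
    have htinv : t⁻¹ = 2 * η⁻¹ := by
      rw [htdef, inv_div, div_eq_mul_inv, mul_comm]
    have hηinv : (0:ℝ) ≤ η⁻¹ := by positivity
    have hb3 : 1 + t⁻¹ ≤ 3 * max 1 η⁻¹ := by
      rcases le_total η⁻¹ 1 with h | h
      · rw [max_eq_left h, htinv]; linarith
      · rw [max_eq_right h, htinv]; linarith
    have hmax : (max 1 η⁻¹) ^ (4 * d) ≤ 1 + η⁻¹ ^ (4 * d) := by
      rcases le_total η⁻¹ 1 with h | h
      · rw [max_eq_left h, one_pow]
        have : (0:ℝ) ≤ η⁻¹ ^ (4 * d) := by positivity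
        linarith
      · rw [max_eq_right h]
        linarith
    calc (1 + t⁻¹) ^ (4 * d) ≤ (3 * max 1 η⁻¹) ^ (4 * d) :=
          pow_le_pow_left₀ (by positivity) hb3 _
      _ = 3 ^ (4 * d) * (max 1 η⁻¹) ^ (4 * d) := mul_pow _ _ _
      _ ≤ 3 ^ (4 * d) * (1 + η⁻¹ ^ (4 * d)) :=
          mul_le_mul_of_nonneg_left hmax (by positivity)
  have hS2 : S ^ 2 ≤ K ^ 2 * (3 ^ (4 * d) * (1 + η⁻¹ ^ (4 * d))) := by
    calc S ^ 2 ≤ (K * (1 + t⁻¹) ^ (2 * d)) ^ 2 := pow_le_pow_left₀ hS0 hSbd 2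
      _ = K ^ 2 * (1 + t⁻¹) ^ (4 * d) := by
          rw [mul_pow, ← pow_mul, show 2 * d * 2 = 4 * d by ring]
      _ ≤ K ^ 2 * (3 ^ (4 * d) * (1 + η⁻¹ ^ (4 * d))) :=
          mul_le_mul_of_nonneg_left h5 (by positivity)
  calc ‖entry (R ∘L B ∘L R) i i‖
      = ‖∑' j, x j * entry R i j‖ := by rw [hOuter.tsum_eq]
    _ ≤ ∑' j, ‖x j * entry R i j‖ := norm_tsum_le_tsum_norm hns2
    _ ≤ ∑' j : Λ × Fin Nb, c2 * Real.exp (-(t * dist (y j.1) (y ℓ))) :=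
        Summable.tsum_le_tsum hOut hns2 hdsum2
    _ = Nb * ∑' q : Λ, c2 * Real.exp (-(t * dist (y q) (y ℓ))) := hdtsum2
    _ = Nb * (c2 * S) := by rw [tsum_mul_left]
    _ = Nb ^ 2 * (2 / 𝔡) ^ 2 * c₁ * elm * S ^ 2 := by rw [hc2def]; ring
    _ ≤ Nb ^ 2 * (2 / 𝔡) ^ 2 * c₁ * elm * (K ^ 2 * (3 ^ (4 * d) * (1 + η⁻¹ ^ (4 * d)))) :=
        mul_le_mul_of_nonneg_left hS2 (by positivity)
    _ = 4 * Nb ^ 2 * c₁ * K ^ 2 * 3 ^ (4 * d) * 𝔡⁻¹ ^ 2 * (1 + η⁻¹ ^ (4 * d)) * elm := by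
        ring
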